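/- Let L ≥ 1, n, m ≥ 1, A_1,…,A_L ∈ ℝ^{n×n}, B_1,…,B_L ∈ ℝ^{n×m}, and let Q ∈ ℝ^{n×n}, R ∈ ℝ^{m×m} be symmetric positive definite. Let q_1,…,q_M ∈ Δ^L. Let Ā ∈ ℝ^{Ln×n} be the vertical stacking of A_1,…,A_L, let B̄ ∈ ℝ^{Ln×m} be the vertical stacking of B_1,…,B_L, and for each l let Σ_l := blockdiag(q_l(1)I_n,…,q_l(L)I_n) ∈ ℝ^{Ln×Ln}. Suppose there exist matrices Y ∈ ℝ^{m×n}, G ∈ ℝ^{n×n}, and symmetric positive definite Q̄ ∈ ℝ^{n×n} such that for every l ∈ {1,…,M} the symmetric block matrix [[I_L ⊗ Q̄, 0, 0, −Σ_l^{1/2}(ĀG + B̄Y)], [∗, R^{−1}, 0, −Y], [∗, ∗, I_n, −Q^{1/2}G], [∗, ∗, ∗, −Q̄ + G + Gᵀ]] is positive definite. Then G is invertible, and setting F := Y G^{−1} and P := Q̄^{−1} (which is symmetric positive definite), for every l ∈ {1,…,M} the matrix Σ_{j=1}^L q_l(j)(A_j + B_j F)ᵀ P (A_j + B_j F) − P +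 FᵀRF + Q is negative definite. -/

import Mathlib

open Matrix
open scoped Kronecker

/-- The vertically stacked matrix `Ā = [A_1; …; A_L]`. -/
def stackMat {L n k : ℕ} (A : Fin L → Matrix (Fin n) (Fin k) ℝ) :
    Matrix (Fin L × Fin n) (Fin k) ℝ :=
  Matrix.of fun li j => A li.1 li.2 j

/-- The square root `Σ_l^{1/2}` of the block-diagonal matrix
`Σ_l = blockdiag(q_l(1)I_n, …, q_l(L)I_n)`. -/
noncomputable def sigmaHalf {L : ℕ} (n : ℕ) (ql : Fin L → ℝ) :
    Matrix (Fin L × Fin n) (Fin L × Fin n) ℝ :=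
  Matrix.diagonal fun li => Real.sqrt (ql li.1)

/-- The square root of a positive semidefinite matrix, as `Matrix.PosSemidef.sqrt` was
defined in Mathlib (Dec 2024); that definition has since been removed. -/
noncomputable def posSemidefSqrt {n : Type*} [Fintype n] [DecidableEq n]
    {A : Matrix n n ℝ} (hA : A.PosSemidef) : Matrix n n ℝ :=
  hA.1.eigenvectorUnitary * diagonal (Real.sqrt ∘ hA.1.eigenvalues) *
    (star hA.1.eigenvectorUnitary : Matrix n n ℝ)

/-- The 4×4 symmetric block matrix of the paper's LMI (13), with blocks of sizes
`Ln, m, n, n`; the lower-left blocks are determined by symmetry. -/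
noncomputable def bigLMI {L n m : ℕ}
    (A : Fin L → Matrix (Fin n) (Fin n) ℝ) (B : Fin L → Matrix (Fin n) (Fin m) ℝ)
    (Q : Matrix (Fin n) (Fin n) ℝ) (hQ : Q.PosDef) (R : Matrix (Fin m) (Fin m) ℝ)
    (ql : Fin L → ℝ) (Y : Matrix (Fin m) (Fin n) ℝ)
    (G Qbar : Matrix (Fin n) (Fin n) ℝ) :
    Matrix (((Fin L × Fin n) ⊕ Fin m) ⊕ (Fin n ⊕ Fin n))
      (((Fin L × Fin n) ⊕ Fin m) ⊕ (Fin n ⊕ Fin n)) ℝ :=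
  Matrix.fromBlocks
    (Matrix.fromBlocks ((1 : Matrix (Fin L) (Fin L) ℝ) ⊗ₖ Qbar) 0 0 R⁻¹)
    (Matrix.fromBlocks 0 (-(sigmaHalf n ql * (stackMat A * G + stackMat B * Y)))
      0 (-Y))
    (Matrix.fromBlocks 0 (-(sigmaHalf n ql * (stackMat A * G + stackMat B * Y)))
      0 (-Y))ᵀ
    (Matrix.fromBlocks 1 (-(posSemidefSqrt hQ.posSemidef * G))
      (-(posSemidefSqrt hQ.posSemidef * G))ᵀ (-Qbar + G + Gᵀ))

section AuxLemmas

lemma posSemidefSqrt_herm {n : Type*} [Fintype n] [DecidableEq n]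
    {A : Matrix n n ℝ} (hA : A.PosSemidef) : (posSemidefSqrt hA)ᴴ = posSemidefSqrt hA := by
  unfold posSemidefSqrt
  simp [conjTranspose_mul, Matrix.mul_assoc, diagonal_conjTranspose, ← star_eq_conjTranspose]
  rw [star_eq_conjTranspose, conjTranspose_eq_transpose_of_trivial, transpose_transpose]

lemma posSemidefSqrt_mul_self' {n : Type*} [Fintype n] [DecidableEq n]
    {A : Matrix n n ℝ} (hA : A.PosSemidef) : posSemidefSqrt hA * posSemidefSqrt hA = A := by
  have hU : (star hA.1.eigenvectorUnitary : Matrix n n ℝ) * hA.1.eigenvectorUnitary = 1 :=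
    Unitary.coe_star_mul_self _
  have hsp := hA.1.spectral_theorem
  rw [Unitary.conjStarAlgAut_apply] at hsp
  unfold posSemidefSqrt
  calc (hA.1.eigenvectorUnitary : Matrix n n ℝ) * diagonal (Real.sqrt ∘ hA.1.eigenvalues) *
        (star hA.1.eigenvectorUnitary : Matrix n n ℝ) *
        ((hA.1.eigenvectorUnitary : Matrix n n ℝ) * diagonal (Real.sqrt ∘ hA.1.eigenvalues) *
        (star hA.1.eigenvectorUnitary : Matrix n n ℝ))
      = (hA.1.eigenvectorUnitary : Matrix n n ℝ) * (diagonal (Real.sqrt ∘ hA.1.eigenvalues) *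
        ((star hA.1.eigenvectorUnitary : Matrix n n ℝ) * hA.1.eigenvectorUnitary) *
        diagonal (Real.sqrt ∘ hA.1.eigenvalues)) *
        (star hA.1.eigenvectorUnitary : Matrix n n ℝ) := by simp only [Matrix.mul_assoc]
    _ = (hA.1.eigenvectorUnitary : Matrix n n ℝ) * diagonal (RCLike.ofReal ∘ hA.1.eigenvalues) *
        (star hA.1.eigenvectorUnitary : Matrix n n ℝ) := by
      rw [hU, Matrix.mul_one, diagonal_mul_diagonal]
      congr 2
      funext i j
      rcases eq_or_ne i j with rfl | h
      · simp [Real.mul_self_sqrt (hA.eigenvalues_nonneg i)]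
      · simp [diagonal_apply, h]
    _ = A := hsp.symm

/-- Schur complement direction for PosDef, over ℝ. -/
lemma posDef_schur {m' n' : Type*} [Fintype m'] [DecidableEq m'] [Fintype n']
    {A : Matrix m' m' ℝ} (B : Matrix m' n' ℝ) (D : Matrix n' n' ℝ) (hA : A.PosDef)
    (h : (Matrix.fromBlocks A B Bᴴ D).PosDef) : (D - Bᴴ * A⁻¹ * B).PosDef := by
  haveI := hA.isUnit.invertible
  refine posDef_iff_dotProduct_mulVec.mpr ⟨(Matrix.IsHermitian.fromBlocks₁₁ B D hA.1).mp h.1, fun x hx => ?_⟩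
  have hv : (Sum.elim (-((A⁻¹ * B) *ᵥ x)) x) ≠ 0 := by
    intro hcon
    exact hx (funext fun i => congrFun hcon (Sum.inr i))
  have := h.dotProduct_mulVec_pos hv
  rw [dotProduct_mulVec, Matrix.schur_complement_eq₁₁ B D _ _ hA.1, neg_add_cancel,
    dotProduct_zero, zero_add] at this
  rwa [dotProduct_mulVec]

lemma posDef_fromBlocks_diag {m' n' : Type*} [Fintype m'] [DecidableEq m'] [Fintype n']
    [DecidableEq n'] {A : Matrix m' m' ℝ} {D : Matrix n' n' ℝ}
    (hA : A.PosDef) (hD : D.PosDef) : (Matrix.fromBlocks A 0 0 D).PosDef := by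
  rw [posDef_iff_dotProduct_mulVec]
  constructor
  · rw [isHermitian_fromBlocks_iff]
    exact ⟨hA.1, by simp, by simp, hD.1⟩
  · intro x hx
    have hsplit : x = Sum.elim (x ∘ Sum.inl) (x ∘ Sum.inr) := (Sum.elim_comp_inl_inr x).symm
    have hne : x ∘ Sum.inl ≠ 0 ∨ x ∘ Sum.inr ≠ 0 := by
      by_contra hcon
      push_neg at hcon
      apply hx
      funext i
      cases i with
      | inl i => exact congrFun hcon.1 i
      | inr i => exact congrFun hcon.2 i
    rw [hsplit, fromBlocks_mulVec]
    simp only [zero_mulVec, add_zero, zero_add, Function.star_sumElim,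
      sumElim_dotProduct_sumElim]
    rcases hne with h1 | h1
    · exact add_pos_of_pos_of_nonneg (hA.dotProduct_mulVec_pos h1) (hD.posSemidef.dotProduct_mulVec_nonneg _)
    · exact add_pos_of_nonneg_of_pos (hA.posSemidef.dotProduct_mulVec_nonneg _) (hD.dotProduct_mulVec_pos h1)

lemma posDef_conj {n' : Type*} [Fintype n'] [DecidableEq n'] {K E : Matrix n' n' ℝ}
    (hK : K.PosDef) (hE : IsUnit E.det) : (Eᵀ * K * E).PosDef := by
  rw [posDef_iff_dotProduct_mulVec]
  constructor
  · have : Eᵀ = Eᴴ := (conjTranspose_eq_transpose_of_trivial E).symm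
    rw [this]
    exact Matrix.isHermitian_conjTranspose_mul_mul E hK.1
  · intro x hx
    have hEx : E *ᵥ x ≠ 0 := by
      intro hc
      rw [isUnit_iff_ne_zero] at hE
      exact hE ((Matrix.exists_mulVec_eq_zero_iff).mp ⟨x, hx, hc⟩)
    have := hK.dotProduct_mulVec_pos hEx
    simpa [Matrix.mul_assoc, ← Matrix.mulVec_mulVec, dotProduct_mulVec, vecMul_transpose,
      star_mulVec] using this

lemma posSemidef_smul {n' : Type*} [Fintype n'] {K : Matrix n' n' ℝ}
    (hK : K.PosSemidef) {c : ℝ} (hc : 0 ≤ c) : (c • K).PosSemidef := by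
  rw [posSemidef_iff_dotProduct_mulVec]
  constructor
  · unfold Matrix.IsHermitian
    rw [conjTranspose_smul, hK.1]
    simp
  · intro x
    rw [smul_mulVec, dotProduct_smul, smul_eq_mul]
    exact mul_nonneg hc (hK.dotProduct_mulVec_nonneg x)

lemma kron_one_posDef {L n : ℕ} {Qb : Matrix (Fin n) (Fin n) ℝ} (h : Qb.PosDef) :
    ((1 : Matrix (Fin L) (Fin L) ℝ) ⊗ₖ Qb).PosDef := by
  rw [posDef_iff_dotProduct_mulVec]
  constructor
  · ext ⟨i, a⟩ ⟨j, b⟩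
    simp only [conjTranspose_apply, kroneckerMap_apply, one_apply, star_trivial]
    by_cases hij : i = j
    · subst hij
      simp only [if_pos rfl]
      have := h.1.apply b a
      simpa using this.symm
    · simp [hij, Ne.symm hij]
  · intro x hx
    have hx' : ∃ i : Fin L, (fun a => x (i, a)) ≠ 0 := by
      by_contra hcon
      push_neg at hcon
      apply hx
      funext ⟨i, a⟩
      exact congrFun (hcon i) a
    obtain ⟨i0, hi0⟩ := hx'
    have key : (star x) ⬝ᵥ ((1 : Matrix (Fin L) (Fin L) ℝ) ⊗ₖ Qb) *ᵥ x
        = ∑ i : Fin L, (star fun a => x (i, a)) ⬝ᵥ Qb *ᵥ (fun a => x (i, a)) := by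
      simp only [dotProduct, mulVec, Fintype.sum_prod_type, kroneckerMap_apply, one_apply,
        Pi.star_apply, star_trivial, ite_mul, one_mul, zero_mul]
      refine Finset.sum_congr rfl fun i _ => Finset.sum_congr rfl fun a _ => ?_
      congr 1
      rw [Finset.sum_comm]
      simp [Finset.sum_ite_eq, Finset.sum_ite_eq']
    rw [key]
    refine Finset.sum_pos' (fun i _ => h.posSemidef.dotProduct_mulVec_nonneg _) ⟨i0, Finset.mem_univ _, h.dotProduct_mulVec_pos hi0⟩

lemma sigma_kron_sigma {L n : ℕ} (ql : Fin L → ℝ) (hql : ∀ j, 0 ≤ ql j)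
    (P : Matrix (Fin n) (Fin n) ℝ) :
    sigmaHalf n ql * ((1 : Matrix (Fin L) (Fin L) ℝ) ⊗ₖ P) * sigmaHalf n ql
      = (Matrix.diagonal ql) ⊗ₖ P := by
  ext ⟨i, a⟩ ⟨j, b⟩
  simp only [sigmaHalf, Matrix.diagonal_mul, Matrix.mul_diagonal, kroneckerMap_apply,
    one_apply, diagonal_apply]
  by_cases hij : i = j
  · subst hij
    simp [Real.mul_self_sqrt (hql i), mul_comm, mul_assoc, mul_left_comm]
  · simp [hij]

lemma stack_mul_add {L n m : ℕ} (A : Fin L → Matrix (Fin n) (Fin n) ℝ)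
    (B : Fin L → Matrix (Fin n) (Fin m) ℝ) (G : Matrix (Fin n) (Fin n) ℝ)
    (Y : Matrix (Fin m) (Fin n) ℝ) :
    stackMat A * G + stackMat B * Y = stackMat (fun j => A j * G + B j * Y) := by
  ext ⟨i, a⟩ b
  simp [stackMat, Matrix.mul_apply, Matrix.add_apply]

lemma stack_quad {L n : ℕ} (ql : Fin L → ℝ) (P : Matrix (Fin n) (Fin n) ℝ)
    (V : Fin L → Matrix (Fin n) (Fin n) ℝ) :
    (stackMat V)ᵀ * ((Matrix.diagonal ql) ⊗ₖ P) * stackMat V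
      = ∑ j, ql j • ((V j)ᵀ * P * V j) := by
  ext a b
  simp only [Matrix.mul_apply, Matrix.transpose_apply, Matrix.sum_apply, Matrix.smul_apply,
    kroneckerMap_apply, diagonal_apply, stackMat, Matrix.of_apply, Fintype.sum_prod_type,
    smul_eq_mul, ite_mul, zero_mul, mul_ite, mul_zero]
  refine Finset.sum_congr rfl fun j _ => ?_
  rw [Finset.mul_sum]
  refine Finset.sum_congr rfl fun c _ => ?_
  rw [Finset.sum_comm]
  simp only [Finset.sum_ite_eq', Finset.mem_univ, if_true]
  simp only [Finset.sum_mul, Finset.mul_sum]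
  refine Finset.sum_congr rfl fun d _ => ?_
  ring

/-- The central block computation: the (2,2) entry of `Cᴴ D₀⁻¹ C`. -/
lemma key_block {L n m : ℕ} (ql : Fin L → ℝ) (hql : ∀ j, 0 ≤ ql j)
    (P : Matrix (Fin n) (Fin n) ℝ)
    (A : Fin L → Matrix (Fin n) (Fin n) ℝ) (B : Fin L → Matrix (Fin n) (Fin m) ℝ)
    (G : Matrix (Fin n) (Fin n) ℝ) (Y : Matrix (Fin m) (Fin n) ℝ) :
    (-(sigmaHalf n ql * (stackMat A * G + stackMat B * Y)))ᴴ
        * ((1 : Matrix (Fin L) (Fin L) ℝ) ⊗ₖ P)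
        * (-(sigmaHalf n ql * (stackMat A * G + stackMat B * Y)))
      = ∑ j, ql j • ((A j * G + B j * Y)ᵀ * P * (A j * G + B j * Y)) := by
  have hσ : (sigmaHalf n ql)ᵀ = sigmaHalf n ql := by
    simp [sigmaHalf, Matrix.diagonal_transpose]
  simp only [conjTranspose_neg, Matrix.neg_mul, Matrix.mul_neg, neg_neg]
  rw [conjTranspose_eq_transpose_of_trivial, Matrix.transpose_mul, hσ]
  have hassoc : (stackMat A * G + stackMat B * Y)ᵀ * sigmaHalf n ql
        * ((1 : Matrix (Fin L) (Fin L) ℝ) ⊗ₖ P)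
        * (sigmaHalf n ql * (stackMat A * G + stackMat B * Y))
      = (stackMat A * G + stackMat B * Y)ᵀ
        * (sigmaHalf n ql * ((1 : Matrix (Fin L) (Fin L) ℝ) ⊗ₖ P) * sigmaHalf n ql)
        * (stackMat A * G + stackMat B * Y) := by
    simp only [Matrix.mul_assoc]
  rw [hassoc, sigma_kron_sigma ql hql, stack_mul_add]
  have := stack_quad ql P (fun j => A j * G + B j * Y)
  simpa using this

end AuxLemmas

/-- One direction of the LMI characterization (Theorem 4 of the paper): feasibility of
the LMI (13) implies invertibility of `G` and, with `F = YG⁻¹` and `P = Q̄⁻¹`,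
negative definiteness of the terminal-cost condition (11). -/
theorem stmt_15 (L n m M : ℕ) (hL : 1 ≤ L) (hn : 1 ≤ n) (hm : 1 ≤ m) (hM : 1 ≤ M)
    (A : Fin L → Matrix (Fin n) (Fin n) ℝ) (B : Fin L → Matrix (Fin n) (Fin m) ℝ)
    (Q : Matrix (Fin n) (Fin n) ℝ) (R : Matrix (Fin m) (Fin m) ℝ)
    (hQ : Q.PosDef) (hR : R.PosDef)
    (q : Fin M → Fin L → ℝ) (hq : ∀ l, q l ∈ stdSimplex ℝ (Fin L))
    (Y : Matrix (Fin m) (Fin n) ℝ) (G : Matrix (Fin n) (Fin n) ℝ)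
    (Qbar : Matrix (Fin n) (Fin n) ℝ) (hQbar : Qbar.PosDef)
    (hlmi : ∀ l : Fin M, (bigLMI A B Q hQ R (q l) Y G Qbar).PosDef) :
    IsUnit G.det ∧ (Qbar⁻¹).PosDef ∧ ∀ l : Fin M,
      (-((∑ j, q l j • ((A j + B j * (Y * G⁻¹))ᵀ * Qbar⁻¹ * (A j + B j * (Y * G⁻¹))))
          - Qbar⁻¹ + (Y * G⁻¹)ᵀ * R * (Y * G⁻¹) + Q)).PosDef := by
  have hqnn : ∀ l j, 0 ≤ q l j := fun l j => (hq l).1 j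
  have hPpd : (Qbar⁻¹).PosDef := hQbar.inv
  -- Step 1: Schur complement reduction of the LMI.
  have key : ∀ l : Fin M,
      (-Qbar + G + Gᵀ
        - ((∑ j, q l j • ((A j * G + B j * Y)ᵀ * Qbar⁻¹ * (A j * G + B j * Y)))
            + Yᵀ * R * Y)
        - Gᵀ * Q * G).PosDef := by
    intro l
    have h0 := hlmi l
    unfold bigLMI at h0
    rw [show (Matrix.fromBlocks 0
        (-(sigmaHalf n (q l) * (stackMat A * G + stackMat B * Y))) 0 (-Y))ᵀ
      = (Matrix.fromBlocks 0
        (-(sigmaHalf n (q l) * (stackMat A * G + stackMat B * Y))) 0 (-Y))ᴴ from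
      (conjTranspose_eq_transpose_of_trivial _).symm] at h0
    rw [show (-((posSemidefSqrt hQ.posSemidef) * G))ᵀ = (-((posSemidefSqrt hQ.posSemidef) * G))ᴴ from
      (conjTranspose_eq_transpose_of_trivial _).symm] at h0
    have hTL : (Matrix.fromBlocks ((1 : Matrix (Fin L) (Fin L) ℝ) ⊗ₖ Qbar) 0 0 R⁻¹).PosDef :=
      posDef_fromBlocks_diag (kron_one_posDef hQbar) hR.inv
    have h1 := posDef_schur _ _ hTL h0
    have hTLinv : (Matrix.fromBlocks ((1 : Matrix (Fin L) (Fin L) ℝ) ⊗ₖ Qbar) 0 0 R⁻¹)⁻¹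
        = Matrix.fromBlocks ((1 : Matrix (Fin L) (Fin L) ℝ) ⊗ₖ Qbar⁻¹) 0 0 R := by
      rw [Matrix.inv_fromBlocks_zero₂₁_of_isUnit_iff _ _ _
        (iff_of_true (kron_one_posDef hQbar).isUnit hR.inv.isUnit)]
      rw [Matrix.inv_kronecker, inv_one,
        Matrix.nonsing_inv_nonsing_inv _ hR.det_pos.ne'.isUnit]
      simp
    have hCcomp : (Matrix.fromBlocks (0 : Matrix (Fin L × Fin n) (Fin n) ℝ)
          (-(sigmaHalf n (q l) * (stackMat A * G + stackMat B * Y)))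
          (0 : Matrix (Fin m) (Fin n) ℝ) (-Y))ᴴ
        * (Matrix.fromBlocks ((1 : Matrix (Fin L) (Fin L) ℝ) ⊗ₖ Qbar) 0 0 R⁻¹)⁻¹
        * (Matrix.fromBlocks (0 : Matrix (Fin L × Fin n) (Fin n) ℝ)
          (-(sigmaHalf n (q l) * (stackMat A * G + stackMat B * Y)))
          (0 : Matrix (Fin m) (Fin n) ℝ) (-Y))
        = Matrix.fromBlocks 0 0 0
            ((∑ j, q l j • ((A j * G + B j * Y)ᵀ * Qbar⁻¹ * (A j * G + B j * Y)))
              + Yᵀ * R * Y) := by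
      rw [hTLinv, Matrix.fromBlocks_conjTranspose, Matrix.fromBlocks_multiply,
        Matrix.fromBlocks_multiply]
      simp only [Matrix.mul_zero, Matrix.zero_mul, add_zero, zero_add,
        conjTranspose_zero]
      rw [key_block (q l) (hqnn l) Qbar⁻¹ A B G Y]
      simp only [conjTranspose_neg, Matrix.transpose_neg, Matrix.neg_mul, Matrix.mul_neg,
        neg_neg, conjTranspose_eq_transpose_of_trivial]
    rw [hCcomp] at h1
    have hEsub : Matrix.fromBlocks 1 (-((posSemidefSqrt hQ.posSemidef) * G))
          (-((posSemidefSqrt hQ.posSemidef) * G))ᴴ (-Qbar + G + Gᵀ)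
        - Matrix.fromBlocks 0 0 0
            ((∑ j, q l j • ((A j * G + B j * Y)ᵀ * Qbar⁻¹ * (A j * G + B j * Y)))
              + Yᵀ * R * Y)
        = Matrix.fromBlocks 1 (-((posSemidefSqrt hQ.posSemidef) * G))
          (-((posSemidefSqrt hQ.posSemidef) * G))ᴴ
          (-Qbar + G + Gᵀ
            - ((∑ j, q l j • ((A j * G + B j * Y)ᵀ * Qbar⁻¹ * (A j * G + B j * Y)))
              + Yᵀ * R * Y)) := by
      rw [sub_eq_add_neg, Matrix.fromBlocks_neg, Matrix.fromBlocks_add]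
      simp [sub_eq_add_neg]
    rw [hEsub] at h1
    have h2 := posDef_schur _ _ Matrix.PosDef.one h1
    have hXQ : (-((posSemidefSqrt hQ.posSemidef) * G))ᴴ * (1 : Matrix (Fin n) (Fin n) ℝ)⁻¹
          * (-((posSemidefSqrt hQ.posSemidef) * G)) = Gᵀ * Q * G := by
      have hsym : (posSemidefSqrt hQ.posSemidef)ᴴ = (posSemidefSqrt hQ.posSemidef) := posSemidefSqrt_herm hQ.posSemidef
      rw [inv_one, Matrix.mul_one]
      simp only [conjTranspose_neg, Matrix.neg_mul, Matrix.mul_neg, neg_neg]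
      rw [conjTranspose_mul, hsym, conjTranspose_eq_transpose_of_trivial G,
        Matrix.mul_assoc Gᵀ, ← Matrix.mul_assoc (posSemidefSqrt hQ.posSemidef),
        posSemidefSqrt_mul_self' hQ.posSemidef, ← Matrix.mul_assoc]
    rw [hXQ] at h2
    exact h2
  -- Step 2: positive semidefinite pieces
  have hTpsd : ∀ l : Fin M,
      (∑ j, q l j • ((A j * G + B j * Y)ᵀ * Qbar⁻¹ * (A j * G + B j * Y))).PosSemidef := by
    intro l
    refine Finset.sum_induction _ _ (fun a b ha hb => ha.add hb) Matrix.PosSemidef.zero ?_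
    intro j _
    refine posSemidef_smul ?_ (hqnn l j)
    have h := hPpd.posSemidef.conjTranspose_mul_mul_same (A j * G + B j * Y)
    rwa [conjTranspose_eq_transpose_of_trivial] at h
  have hYRY : (Yᵀ * R * Y).PosSemidef := by
    have h := hR.posSemidef.conjTranspose_mul_mul_same Y
    rwa [conjTranspose_eq_transpose_of_trivial] at h
  have hGQG : (Gᵀ * Q * G).PosSemidef := by
    have h := hQ.posSemidef.conjTranspose_mul_mul_same G
    rwa [conjTranspose_eq_transpose_of_trivial] at h
  -- Step 3: G is invertible
  have hGGt : (G + Gᵀ).PosDef := by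
    have heq : G + Gᵀ =
        (-Qbar + G + Gᵀ
          - ((∑ j, q ⟨0, hM⟩ j • ((A j * G + B j * Y)ᵀ * Qbar⁻¹ * (A j * G + B j * Y)))
              + Yᵀ * R * Y) - Gᵀ * Q * G)
        + (Qbar + ((∑ j, q ⟨0, hM⟩ j • ((A j * G + B j * Y)ᵀ * Qbar⁻¹ * (A j * G + B j * Y)))
              + Yᵀ * R * Y) + Gᵀ * Q * G) := by
      abel
    rw [heq]
    exact (key ⟨0, hM⟩).add_posSemidef
      ((hQbar.posSemidef.add ((hTpsd ⟨0, hM⟩).add hYRY)).add hGQG)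
  have hGdet : IsUnit G.det := by
    rw [isUnit_iff_ne_zero]
    intro h0
    obtain ⟨v, hv, hGv⟩ := (Matrix.exists_mulVec_eq_zero_iff).mpr h0
    have hpos := hGGt.dotProduct_mulVec_pos hv
    rw [star_trivial, add_mulVec, dotProduct_add, hGv, dotProduct_zero, zero_add,
      mulVec_transpose, dotProduct_comm, ← dotProduct_mulVec, hGv, dotProduct_zero] at hpos
    exact lt_irrefl _ hpos
  refine ⟨hGdet, hPpd, fun l => ?_⟩
  -- Step 4: conjugate by G⁻¹
  have hGinv : G * G⁻¹ = 1 := Matrix.mul_nonsing_inv G hGdet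
  have hQbdet : IsUnit Qbar.det := hQbar.det_pos.ne'.isUnit
  have hQP : Qbar * Qbar⁻¹ = 1 := Matrix.mul_nonsing_inv Qbar hQbdet
  have hPQ : Qbar⁻¹ * Qbar = 1 := Matrix.nonsing_inv_mul Qbar hQbdet
  have hQbarT : Qbarᵀ = Qbar := by
    rw [← conjTranspose_eq_transpose_of_trivial]; exact hQbar.1
  have hGtinv : (G⁻¹)ᵀ * Gᵀ = 1 := by
    rw [← Matrix.transpose_mul, hGinv, Matrix.transpose_one]
  have e1 : (G⁻¹)ᵀ * (Gᵀ * Qbar⁻¹ * G) * G⁻¹ = Qbar⁻¹ := by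
    calc (G⁻¹)ᵀ * (Gᵀ * Qbar⁻¹ * G) * G⁻¹
        = ((G⁻¹)ᵀ * Gᵀ) * (Qbar⁻¹ * (G * G⁻¹)) := by
          simp only [Matrix.mul_assoc]
      _ = Qbar⁻¹ := by rw [hGtinv, hGinv, Matrix.one_mul, Matrix.mul_one]
  have e4 : (G⁻¹)ᵀ * (Gᵀ * Q * G) * G⁻¹ = Q := by
    calc (G⁻¹)ᵀ * (Gᵀ * Q * G) * G⁻¹
        = ((G⁻¹)ᵀ * Gᵀ) * (Q * (G * G⁻¹)) := by simp only [Matrix.mul_assoc]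
      _ = Q := by rw [hGtinv, hGinv, Matrix.one_mul, Matrix.mul_one]
  have e3 : (G⁻¹)ᵀ * (Yᵀ * R * Y) * G⁻¹ = (Y * G⁻¹)ᵀ * R * (Y * G⁻¹) := by
    rw [Matrix.transpose_mul]
    simp only [Matrix.mul_assoc]
  have hterm : ∀ j : Fin L,
      (G⁻¹)ᵀ * ((A j * G + B j * Y)ᵀ * Qbar⁻¹ * (A j * G + B j * Y)) * G⁻¹
        = (A j + B j * (Y * G⁻¹))ᵀ * Qbar⁻¹ * (A j + B j * (Y * G⁻¹)) := by
    intro j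
    have h1 : (A j * G + B j * Y) * G⁻¹ = A j + B j * (Y * G⁻¹) := by
      rw [Matrix.add_mul, Matrix.mul_assoc (A j), hGinv, Matrix.mul_one, Matrix.mul_assoc]
    have h2 : ((A j * G + B j * Y) * G⁻¹)ᵀ * Qbar⁻¹ * ((A j * G + B j * Y) * G⁻¹)
        = (G⁻¹)ᵀ * ((A j * G + B j * Y)ᵀ * Qbar⁻¹ * (A j * G + B j * Y)) * G⁻¹ := by
      rw [Matrix.transpose_mul]
      simp only [Matrix.mul_assoc]
    rw [← h2, h1]
  have e2 : (G⁻¹)ᵀ * (∑ j, q l j • ((A j * G + B j * Y)ᵀ * Qbar⁻¹ * (A j * G + B j * Y))) * G⁻¹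
      = ∑ j, q l j • ((A j + B j * (Y * G⁻¹))ᵀ * Qbar⁻¹ * (A j + B j * (Y * G⁻¹))) := by
    rw [Finset.mul_sum, Finset.sum_mul]
    refine Finset.sum_congr rfl fun j _ => ?_
    rw [mul_smul_comm, smul_mul_assoc, hterm j]
  have hconjexp : (G - Qbar)ᵀ * Qbar⁻¹ * (G - Qbar)
      = Gᵀ * Qbar⁻¹ * G - Gᵀ - G + Qbar := by
    rw [Matrix.transpose_sub, hQbarT, Matrix.sub_mul, hQP, Matrix.sub_mul, Matrix.mul_sub,
      Matrix.one_mul, Matrix.mul_assoc Gᵀ Qbar⁻¹ Qbar, hPQ, Matrix.mul_one]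
    abel
  have hkeyconj : ((G - Qbar)ᵀ * Qbar⁻¹ * (G - Qbar)).PosSemidef := by
    have h := hPpd.posSemidef.conjTranspose_mul_mul_same (G - Qbar)
    rwa [conjTranspose_eq_transpose_of_trivial] at h
  have hbig := (key l).add_posSemidef hkeyconj
  have hinner : (-Qbar + G + Gᵀ
        - ((∑ j, q l j • ((A j * G + B j * Y)ᵀ * Qbar⁻¹ * (A j * G + B j * Y)))
            + Yᵀ * R * Y) - Gᵀ * Q * G)
        + (G - Qbar)ᵀ * Qbar⁻¹ * (G - Qbar)
      = Gᵀ * Qbar⁻¹ * G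
        - (∑ j, q l j • ((A j * G + B j * Y)ᵀ * Qbar⁻¹ * (A j * G + B j * Y)))
        - Yᵀ * R * Y - Gᵀ * Q * G := by
    rw [hconjexp]
    abel
  rw [hinner] at hbig
  have hdetinv : IsUnit (G⁻¹).det := by
    rw [Matrix.det_nonsing_inv]
    exact isUnit_ringInverse.mpr hGdet
  have hgoal : -((∑ j, q l j • ((A j + B j * (Y * G⁻¹))ᵀ * Qbar⁻¹ * (A j + B j * (Y * G⁻¹))))
        - Qbar⁻¹ + (Y * G⁻¹)ᵀ * R * (Y * G⁻¹) + Q)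
      = (G⁻¹)ᵀ * (Gᵀ * Qbar⁻¹ * G
          - (∑ j, q l j • ((A j * G + B j * Y)ᵀ * Qbar⁻¹ * (A j * G + B j * Y)))
          - Yᵀ * R * Y - Gᵀ * Q * G) * G⁻¹ := by
    rw [Matrix.mul_sub, Matrix.mul_sub, Matrix.mul_sub, Matrix.sub_mul, Matrix.sub_mul,
      Matrix.sub_mul, e1, e2, e3, e4]
    abel
  rw [hgoal]
  exact posDef_conj hbig hdetinv
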